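/- Let Z be an integrable real random variable with standard realisation Z' on [0,1], and α ∈ (0,1), λ > 0. Define Z₁ = Z'·𝟙_{[0,α]} − λ·𝟙_{(α,1]} on ([0,1], Lebesgue). If Y is any real random variable such that Y is stochastically dominated by Z and P(Y ≤ −λ) ≥ 1 − α, then Y is stochastically dominated by Z₁; moreover E[Z₁] = E[Z'𝟙_{[0,α]}] − λ(1−α), so E[Z₁] < 0 whenever E[Z'𝟙_{[0,α]}] < λ(1−α). -/

import Mathlib

open MeasureTheory Set Filter
open scoped ENNReal

/-- The standard realisation of a real random variable with law induced by `(P, Z)`: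
`Z'(s) = sup {t : P(Z ≥ t) ≥ s}`, on `[0,1]` with Lebesgue measure. -/
noncomputable def stdReal {E : Type*} [MeasurableSpace E] (P : Measure E) (Z : E → ℝ) :
    ℝ → ℝ :=
  fun s => sSup {t : ℝ | ENNReal.ofReal s ≤ P {e | t ≤ Z e}}

section Aux
variable {E : Type*} [MeasurableSpace E] {P : Measure E} [IsProbabilityMeasure P] {Z : E → ℝ}

lemma zero_mem_set (hZ0 : ∀ e, 0 ≤ Z e) {s : ℝ} (hs : s ≤ 1) :
    (0:ℝ) ∈ {t : ℝ | ENNReal.ofReal s ≤ P {e | t ≤ Z e}} := by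
  have h1 : {e | (0:ℝ) ≤ Z e} = univ := eq_univ_of_forall fun e => hZ0 e
  simp only [mem_setOf_eq, h1, measure_univ]
  exact ENNReal.ofReal_le_one.mpr hs

lemma bddAbove_set (hZmeas : Measurable Z) {s : ℝ} (hs : 0 < s) :
    BddAbove {t : ℝ | ENNReal.ofReal s ≤ P {e | t ≤ Z e}} := by
  have hiInter : (⋂ n : ℕ, {e | (n:ℝ) ≤ Z e}) = ∅ := by
    ext e
    simp only [mem_iInter, mem_setOf_eq, mem_empty_iff_false, iff_false, not_forall]
    obtain ⟨n, hn⟩ := exists_nat_gt (Z e)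
    exact ⟨n, not_le.mpr hn⟩
  have htend : Tendsto (fun n : ℕ => P {e | (n:ℝ) ≤ Z e}) atTop (nhds 0) := by
    have := tendsto_measure_iInter_atTop (μ := P) (s := fun n : ℕ => {e | (n:ℝ) ≤ Z e})
      (fun n => (hZmeas measurableSet_Ici).nullMeasurableSet)
      (fun n m hnm e (he : (m:ℝ) ≤ Z e) => show (n:ℝ) ≤ Z e from le_trans (Nat.cast_le.mpr hnm) he)
      ⟨0, measure_ne_top _ _⟩
    rwa [hiInter, measure_empty] at this
  have hev : ∀ᶠ n : ℕ in atTop, P {e | (n:ℝ) ≤ Z e} < ENNReal.ofReal s :=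
    htend.eventually_lt_const (by simp [hs])
  obtain ⟨n, hn⟩ := hev.exists
  refine ⟨n, fun t ht => ?_⟩
  by_contra hlt
  push_neg at hlt
  exact absurd (le_trans ht (measure_mono fun e he => le_trans (le_of_lt hlt) he)) (not_le.mpr hn)

lemma stdReal_nonneg (hZ0 : ∀ e, 0 ≤ Z e) {s : ℝ} (hs : s ≤ 1) :
    0 ≤ stdReal P Z s := by
  by_cases h : BddAbove {t : ℝ | ENNReal.ofReal s ≤ P {e | t ≤ Z e}}
  · exact le_csSup h (zero_mem_set hZ0 hs)
  · rw [stdReal, Real.sSup_of_not_bddAbove h]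

lemma lemA (hZ0 : ∀ e, 0 ≤ Z e) {s t : ℝ} (hs1 : s ≤ 1) (ht : t < stdReal P Z s) :
    ENNReal.ofReal s ≤ P {e | t < Z e} := by
  obtain ⟨t', ht'mem, htt'⟩ :=
    exists_lt_of_lt_csSup ⟨0, zero_mem_set hZ0 hs1⟩ ht
  exact le_trans ht'mem (measure_mono fun e he => lt_of_lt_of_le htt' he)

lemma lemB (hZmeas : Measurable Z) {s t : ℝ} (hs : 0 < s)
    (h : ENNReal.ofReal s < P {e | t < Z e}) : t < stdReal P Z s := by
  have hU : {e | t < Z e} = ⋃ n : ℕ, {e | t + ((n:ℝ)+1)⁻¹ ≤ Z e} := by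
    ext e
    simp only [mem_setOf_eq, mem_iUnion]
    constructor
    · intro he
      obtain ⟨n, hn⟩ := exists_nat_one_div_lt (sub_pos.mpr he)
      refine ⟨n, ?_⟩
      rw [one_div] at hn
      linarith
    · rintro ⟨n, hn⟩
      have : (0:ℝ) < ((n:ℝ)+1)⁻¹ := by positivity
      linarith
  rw [hU] at h
  have hmono : Monotone fun n : ℕ => {e | t + ((n:ℝ)+1)⁻¹ ≤ Z e} := by
    intro n m hnm e he
    have : ((m:ℝ)+1)⁻¹ ≤ ((n:ℝ)+1)⁻¹ := by
      apply inv_anti₀ (by positivity)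
      have : (n:ℝ) ≤ (m:ℝ) := Nat.cast_le.mpr hnm
      linarith
    simp only [mem_setOf_eq] at he ⊢
    linarith
  rw [hmono.directed_le.measure_iUnion] at h
  obtain ⟨n, hn⟩ := lt_iSup_iff.mp h
  have hmem : t + ((n:ℝ)+1)⁻¹ ∈ {t' : ℝ | ENNReal.ofReal s ≤ P {e | t' ≤ Z e}} :=
    le_of_lt hn
  have := le_csSup (bddAbove_set hZmeas hs) hmem
  have hpos : (0:ℝ) < ((n:ℝ)+1)⁻¹ := by positivity
  calc t < t + ((n:ℝ)+1)⁻¹ := by linarith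
  _ ≤ stdReal P Z s := this

lemma stdReal_antitoneOn (hZ0 : ∀ e, 0 ≤ Z e) (hZmeas : Measurable Z) :
    AntitoneOn (stdReal P Z) (Ioc (0:ℝ) 1) := by
  intro s hs s' hs' hss'
  apply csSup_le_csSup (bddAbove_set hZmeas hs.1) ⟨0, zero_mem_set hZ0 hs'.2⟩
  intro t ht
  exact le_trans (ENNReal.ofReal_le_ofReal hss') ht

end Aux

section Aux2
variable {E : Type*} [MeasurableSpace E] {P : Measure E} [IsProbabilityMeasure P] {Z : E → ℝ}

lemma meas_lt_stdReal_le (hZ0 : ∀ e, 0 ≤ Z e) {t a : ℝ} (ha : a ≤ 1) :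
    volume ({s : ℝ | t < stdReal P Z s} ∩ Icc 0 a) ≤ P {e | t < Z e} := by
  set c := (P {e | t < Z e}).toReal with hc
  have hsub : {s : ℝ | t < stdReal P Z s} ∩ Icc 0 a ⊆ Icc (0:ℝ) c := by
    rintro s ⟨hs1, hs2⟩
    refine ⟨hs2.1, ?_⟩
    have := lemA hZ0 (le_trans hs2.2 ha) hs1
    exact (ENNReal.ofReal_le_iff_le_toReal (measure_ne_top _ _)).mp this
  calc volume ({s : ℝ | t < stdReal P Z s} ∩ Icc 0 a) ≤ volume (Icc (0:ℝ) c) :=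
        measure_mono hsub
  _ = ENNReal.ofReal c := by simp [Real.volume_Icc]
  _ = P {e | t < Z e} := ENNReal.ofReal_toReal (measure_ne_top _ _)

lemma integrableQ (hZ0 : ∀ e, 0 ≤ Z e) (hZmeas : Measurable Z) (hZint : Integrable Z P)
    {a : ℝ} (ha : a ≤ 1) :
    IntegrableOn (stdReal P Z) (Icc 0 a) volume := by
  have h1 : (volume.restrict (Icc (0:ℝ) a)) = volume.restrict (Ioc 0 a) :=
    Measure.restrict_congr_set Ioc_ae_eq_Icc.symm
  have hmeas : AEMeasurable (stdReal P Z) (volume.restrict (Icc 0 a)) := by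
    rw [h1]
    exact aemeasurable_restrict_of_antitoneOn measurableSet_Ioc
      ((stdReal_antitoneOn hZ0 hZmeas).mono (Ioc_subset_Ioc le_rfl ha))
  have hnn : 0 ≤ᵐ[volume.restrict (Icc (0:ℝ) a)] stdReal P Z :=
    ae_restrict_of_forall_mem measurableSet_Icc
      (fun s hs => stdReal_nonneg hZ0 (hs.2.trans ha))
  refine ⟨hmeas.aestronglyMeasurable, ?_⟩
  rw [HasFiniteIntegral]
  have hcong : ∫⁻ s, ‖stdReal P Z s‖ₑ ∂(volume.restrict (Icc 0 a))
      = ∫⁻ s, ENNReal.ofReal (stdReal P Z s) ∂(volume.restrict (Icc 0 a)) := by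
    apply lintegral_congr_ae
    filter_upwards [hnn] with s hs
    exact Real.enorm_eq_ofReal hs
  rw [hcong, lintegral_eq_lintegral_meas_lt _ hnn hmeas]
  have hbound : ∀ᵐ t ∂(volume.restrict (Ioi (0:ℝ))),
      (volume.restrict (Icc (0:ℝ) a)) {s | t < stdReal P Z s} ≤ P {e | t < Z e} := by
    apply ae_of_all
    intro t
    rw [Measure.restrict_apply' measurableSet_Icc]
    exact meas_lt_stdReal_le hZ0 ha
  calc ∫⁻ t in Ioi (0:ℝ), (volume.restrict (Icc (0:ℝ) a)) {s | t < stdReal P Z s}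
      ≤ ∫⁻ t in Ioi (0:ℝ), P {e | t < Z e} := lintegral_mono_ae hbound
  _ = ∫⁻ e, ENNReal.ofReal (Z e) ∂P :=
      (lintegral_eq_lintegral_meas_lt P (ae_of_all _ hZ0) hZmeas.aemeasurable).symm
  _ < ⊤ := by
      have h2 := hZint.hasFiniteIntegral
      rw [HasFiniteIntegral] at h2
      have : ∫⁻ e, ENNReal.ofReal (Z e) ∂P = ∫⁻ e, ‖Z e‖ₑ ∂P :=
        lintegral_congr fun e => (Real.enorm_eq_ofReal (hZ0 e)).symm
      rwa [this]

end Aux2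


/-- The random variable `Z₁ = Z'·𝟙_{[0,α]} − λ·𝟙_{(α,1]}` on `([0,1], Leb)`. -/
noncomputable def zOne {E : Type*} [MeasurableSpace E] (P : Measure E) (Z : E → ℝ)
    (α lam : ℝ) : ℝ → ℝ :=
  fun s => (Icc (0:ℝ) α).indicator (stdReal P Z) s
    - lam * (Ioc α 1).indicator (fun _ => (1:ℝ)) s

section Aux3
variable {E : Type*} [MeasurableSpace E] {P : Measure E} {Z : E → ℝ}

lemma zOne_eq_left {α lam s : ℝ} (hs : s ∈ Icc (0:ℝ) α) :
    zOne P Z α lam s = stdReal P Z s := by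
  have h2 : s ∉ Ioc α 1 := fun h => absurd hs.2 (not_le.mpr h.1)
  simp [zOne, indicator_of_mem hs, indicator_of_notMem h2]

lemma zOne_eq_right {α lam s : ℝ} (hs : s ∈ Ioc α 1) (h0 : 0 ≤ α) :
    zOne P Z α lam s = -lam := by
  have h2 : s ∉ Icc (0:ℝ) α := fun h => absurd h.2 (not_le.mpr hs.1)
  simp [zOne, indicator_of_mem hs, indicator_of_notMem h2]

end Aux3


/-- If `Y` is stochastically dominated by a nonnegative integrable `Z` and
`P(Y ≤ −λ) ≥ 1 − α`, then `Y` is stochastically dominated by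
`Z₁ = Z'𝟙_{[0,α]} − λ𝟙_{(α,1]}`; moreover `E[Z₁] = E[Z'𝟙_{[0,α]}] − λ(1−α)`,
so `E[Z₁] < 0` whenever `E[Z'𝟙_{[0,α]}] < λ(1−α)`. -/
theorem stmt10 {E E' : Type*} [MeasurableSpace E] [MeasurableSpace E']
    (P : Measure E) [IsProbabilityMeasure P]
    (Z : E → ℝ) (hZmeas : Measurable Z) (hZ0 : ∀ e, 0 ≤ Z e) (hZint : Integrable Z P)
    (α lam : ℝ) (hα : α ∈ Ioo (0:ℝ) 1) (hlam : 0 < lam)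
    (P' : Measure E') [IsProbabilityMeasure P'] (Y : E' → ℝ) (hY : Measurable Y)
    (hdom : ∀ t : ℝ, P' {e | t < Y e} ≤ P {e | t < Z e})
    (hneg : ENNReal.ofReal (1 - α) ≤ P' {e | Y e ≤ -lam}) :
    (∀ t : ℝ, P' {e | t < Y e}
        ≤ volume {s | s ∈ Icc (0:ℝ) 1 ∧ t < zOne P Z α lam s}) ∧
    (∫ s in Icc (0:ℝ) 1, zOne P Z α lam s
        = (∫ s in Icc (0:ℝ) α, stdReal P Z s) - lam * (1 - α)) ∧
    ((∫ s in Icc (0:ℝ) α, stdReal P Z s) < lam * (1 - α) →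
      (∫ s in Icc (0:ℝ) 1, zOne P Z α lam s) < 0) := by
  obtain ⟨hα0, hα1⟩ := hα
  have hQnn : ∀ s : ℝ, s ≤ 1 → 0 ≤ stdReal P Z s := fun s hs => stdReal_nonneg hZ0 hs
  -- Part 1
  have part1 : ∀ t : ℝ, P' {e | t < Y e}
      ≤ volume {s | s ∈ Icc (0:ℝ) 1 ∧ t < zOne P Z α lam s} := by
    intro t
    rcases lt_or_ge t (-lam) with ht | ht
    · have hsub : Icc (0:ℝ) 1 ⊆ {s | s ∈ Icc (0:ℝ) 1 ∧ t < zOne P Z α lam s} := by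
        intro s hs
        refine ⟨hs, ?_⟩
        rcases le_or_gt s α with h | h
        · rw [zOne_eq_left ⟨hs.1, h⟩]
          have := hQnn s hs.2
          linarith
        · rw [zOne_eq_right ⟨h, hs.2⟩ hα0.le]
          linarith
      calc P' {e | t < Y e} ≤ 1 := prob_le_one
      _ = volume (Icc (0:ℝ) 1) := by simp [Real.volume_Icc]
      _ ≤ _ := measure_mono hsub
    · have hP'α : P' {e | t < Y e} ≤ ENNReal.ofReal α := by
        have hsub : {e | t < Y e} ⊆ {e | Y e ≤ -lam}ᶜ := by
          intro e he hle
          simp only [mem_setOf_eq] at he hle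
          linarith
        have hmeas' : MeasurableSet {e | Y e ≤ -lam} := hY measurableSet_Iic
        calc P' {e | t < Y e} ≤ P' {e | Y e ≤ -lam}ᶜ := measure_mono hsub
        _ = 1 - P' {e | Y e ≤ -lam} := prob_compl_eq_one_sub hmeas'
        _ ≤ 1 - ENNReal.ofReal (1 - α) := tsub_le_tsub_left hneg 1
        _ = ENNReal.ofReal α := by
            rw [← ENNReal.ofReal_one, ← ENNReal.ofReal_sub _ (by linarith : (0:ℝ) ≤ 1 - α)]
            norm_num
      rcases lt_or_ge t 0 with ht0 | ht0
      · have hsub : Icc (0:ℝ) α ⊆ {s | s ∈ Icc (0:ℝ) 1 ∧ t < zOne P Z α lam s} := by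
          intro s hs
          refine ⟨⟨hs.1, hs.2.trans hα1.le⟩, ?_⟩
          rw [zOne_eq_left hs]
          have := hQnn s (hs.2.trans hα1.le)
          linarith
        calc P' {e | t < Y e} ≤ ENNReal.ofReal α := hP'α
        _ = volume (Icc (0:ℝ) α) := by simp [Real.volume_Icc]
        _ ≤ _ := measure_mono hsub
      · set c := (P {e | t < Z e}).toReal with hc
        have hPc : ENNReal.ofReal c = P {e | t < Z e} :=
          ENNReal.ofReal_toReal (measure_ne_top _ _)
        have hsub : Ioo (0:ℝ) (min α c) ⊆ {s | s ∈ Icc (0:ℝ) 1 ∧ t < zOne P Z α lam s} := by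
          rintro s ⟨hs0, hs1⟩
          have hsα : s < α := lt_of_lt_of_le hs1 (min_le_left _ _)
          have hsc : s < c := lt_of_lt_of_le hs1 (min_le_right _ _)
          refine ⟨⟨hs0.le, (hsα.le.trans hα1.le)⟩, ?_⟩
          rw [zOne_eq_left ⟨hs0.le, hsα.le⟩]
          apply lemB hZmeas hs0
          calc ENNReal.ofReal s < ENNReal.ofReal c :=
                (ENNReal.ofReal_lt_ofReal_iff_of_nonneg hs0.le).mpr hsc
          _ = P {e | t < Z e} := hPc
        calc P' {e | t < Y e} ≤ min (ENNReal.ofReal α) (P {e | t < Z e}) :=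
              le_min hP'α (hdom t)
        _ = ENNReal.ofReal (min α c) := by
            rw [← hPc]
            rcases le_total α c with h | h
            · rw [min_eq_left h, min_eq_left (ENNReal.ofReal_le_ofReal h)]
            · rw [min_eq_right h, min_eq_right (ENNReal.ofReal_le_ofReal h)]
        _ = volume (Ioo (0:ℝ) (min α c)) := by simp [Real.volume_Ioo]
        _ ≤ _ := measure_mono hsub
  -- Part 2
  have hQint : IntegrableOn (stdReal P Z) (Icc 0 α) volume :=
    integrableQ hZ0 hZmeas hZint hα1.le
  have hres : (volume.restrict (Icc (0:ℝ) 1)).restrict (Icc (0:ℝ) α)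
      = volume.restrict (Icc (0:ℝ) α) := by
    rw [Measure.restrict_restrict measurableSet_Icc,
      inter_eq_left.mpr (Icc_subset_Icc le_rfl hα1.le)]
  have hf : Integrable ((Icc (0:ℝ) α).indicator (stdReal P Z))
      (volume.restrict (Icc (0:ℝ) 1)) := by
    rw [integrable_indicator_iff measurableSet_Icc, IntegrableOn, hres]
    exact hQint
  have hg : Integrable ((Ioc α 1).indicator (fun _ => (1:ℝ)))
      (volume.restrict (Icc (0:ℝ) 1)) := by
    rw [integrable_indicator_iff measurableSet_Ioc]
    apply (integrableOn_const_iff (C := (1:ℝ))).mpr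
    right
    calc (volume.restrict (Icc (0:ℝ) 1)) (Ioc α 1) ≤ volume (Icc (0:ℝ) 1) := by
          rw [Measure.restrict_apply' measurableSet_Icc]
          exact measure_mono inter_subset_right
    _ < ⊤ := by simp [Real.volume_Icc]
  have hμIoc : (volume.restrict (Icc (0:ℝ) 1)) (Ioc α 1) = ENNReal.ofReal (1 - α) := by
    rw [Measure.restrict_apply' measurableSet_Icc,
      inter_eq_left.mpr (Ioc_subset_Icc_self.trans (Icc_subset_Icc hα0.le le_rfl)),
      Real.volume_Ioc]
  have part2 : ∫ s in Icc (0:ℝ) 1, zOne P Z α lam s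
      = (∫ s in Icc (0:ℝ) α, stdReal P Z s) - lam * (1 - α) := by
    have heq : ∫ s in Icc (0:ℝ) 1, zOne P Z α lam s
        = (∫ s in Icc (0:ℝ) 1, (Icc (0:ℝ) α).indicator (stdReal P Z) s)
          - ∫ s in Icc (0:ℝ) 1, lam * (Ioc α 1).indicator (fun _ => (1:ℝ)) s :=
      integral_sub hf (hg.const_mul lam)
    rw [heq, integral_const_mul, integral_indicator measurableSet_Icc,
      integral_indicator measurableSet_Ioc]
    congr 1
    · rw [← integral_indicator measurableSet_Icc]
      rw [integral_indicator measurableSet_Icc]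
      show ∫ s, stdReal P Z s ∂((volume.restrict (Icc (0:ℝ) 1)).restrict (Icc (0:ℝ) α)) = _
      rw [hres]
    · rw [show ∫ s in Ioc α 1, (1:ℝ) ∂(volume.restrict (Icc (0:ℝ) 1))
          = ((volume.restrict (Icc (0:ℝ) 1)).restrict (Ioc α 1) univ).toReal • (1:ℝ) from
          integral_const 1]
      rw [Measure.restrict_apply MeasurableSet.univ, univ_inter, hμIoc,
        ENNReal.toReal_ofReal (by linarith : (0:ℝ) ≤ 1 - α)]
      simp
  refine ⟨part1, part2, fun h => ?_⟩
  rw [part2]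
  linarith
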